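/- Let r : ℝ^d → [0,∞) be Lebesgue measurable. Then ∫_{ℝ^d} ∫_{ℝ^d} f(x) f(y) 1{‖x − y‖ ≤ r(x) + r(y)} dy dx ≤ 2 ∫_{ℝ^d} f(x) (∫_{{y : ‖y − x‖ ≤ 2 r(x)}} f(y) dy) dx. -/

import Mathlib

open MeasureTheory

noncomputable instance piLpMeasurableSpace (p : ENNReal) (d : ℕ) :
    MeasurableSpace (PiLp p (fun _ : Fin d => ℝ)) :=
  MeasurableSpace.comap WithLp.ofLp (inferInstance : MeasurableSpace (Fin d → ℝ))

noncomputable instance piLpMeasureSpace (p : ENNReal) (d : ℕ) :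
    MeasureSpace (PiLp p (fun _ : Fin d => ℝ)) :=
  ⟨(volume : Measure (Fin d → ℝ)).map (WithLp.toLp p)⟩

section aux
variable (p : ENNReal) [Fact (1 ≤ p)] (d : ℕ)

noncomputable def piLpMeasEquiv : PiLp p (fun _ : Fin d => ℝ) ≃ᵐ (Fin d → ℝ) where
  toEquiv := WithLp.equiv p _
  measurable_toFun := by intro s hs; exact ⟨s, hs, rfl⟩
  measurable_invFun := by rintro s ⟨t, ht, rfl⟩; exact ht

instance : BorelSpace (PiLp p (fun _ : Fin d => ℝ)) :=
  (piLpMeasEquiv p d).measurableEmbedding.borelSpace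
    (PiLp.continuousLinearEquiv p ℝ (fun _ : Fin d => ℝ)).toHomeomorph.isInducing

instance : SecondCountableTopology (PiLp p (fun _ : Fin d => ℝ)) :=
  (PiLp.continuousLinearEquiv p ℝ
    (fun _ : Fin d => ℝ)).toHomeomorph.isInducing.secondCountableTopology

instance : SigmaFinite (volume : Measure (PiLp p (fun _ : Fin d => ℝ))) :=
  show SigmaFinite ((volume : Measure (Fin d → ℝ)).map (WithLp.toLp p)) from
    (piLpMeasEquiv p d).symm.sigmaFinite_map
end aux

theorem aux_symmetrization {α : Type*} [MeasurableSpace α] [PseudoMetricSpace α]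
    [OpensMeasurableSpace α] [SecondCountableTopology α] (μ : Measure α) [SigmaFinite μ]
    (f : α → ℝ) (hf_nonneg : ∀ x, 0 ≤ f x)
    (hf_int : Integrable f μ)
    (r : α → ℝ) (hr_meas : Measurable r) :
    (∫ x, ∫ y, (if dist x y ≤ r x + r y then f x * f y else 0) ∂μ ∂μ) ≤
      2 * ∫ x, f x * ∫ y in {y | dist y x ≤ 2 * r x}, f y ∂μ ∂μ := by
  set F : α × α → ℝ := fun q => f q.1 * f q.2 with hF
  have hFint : Integrable F (μ.prod μ) := by exact hf_int.mul_prod hf_int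
  have hFnn : ∀ q, 0 ≤ F q := fun q => mul_nonneg (hf_nonneg _) (hf_nonneg _)
  set A : Set (α × α) := {q | dist q.1 q.2 ≤ r q.1 + r q.2} with hA
  set B : Set (α × α) := {q | dist q.2 q.1 ≤ 2 * r q.1} with hB
  set C : Set (α × α) := {q | dist q.1 q.2 ≤ 2 * r q.2} with hC
  have hmA : MeasurableSet A := by
    apply measurableSet_le measurable_dist
    exact (hr_meas.comp measurable_fst).add (hr_meas.comp measurable_snd)
  have hmB : MeasurableSet B := by
    apply measurableSet_le (measurable_dist.comp measurable_swap)
    exact measurable_const.mul (hr_meas.comp measurable_fst)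
  have hmC : MeasurableSet C := by
    apply measurableSet_le measurable_dist
    exact measurable_const.mul (hr_meas.comp measurable_snd)
  have hAint : Integrable (A.indicator F) (μ.prod μ) := hFint.indicator hmA
  have hBint : Integrable (B.indicator F) (μ.prod μ) := hFint.indicator hmB
  have hCint : Integrable (C.indicator F) (μ.prod μ) := hFint.indicator hmC
  have h1 : (∫ x, ∫ y, (if dist x y ≤ r x + r y then f x * f y else 0) ∂μ ∂μ) =
      ∫ q, A.indicator F q ∂(μ.prod μ) := by
    rw [integral_prod _ hAint]
    refine integral_congr_ae (Filter.Eventually.of_forall fun x => ?_)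
    refine integral_congr_ae (Filter.Eventually.of_forall fun y => ?_)
    simp [Set.indicator_apply, hA, hF]
  have h2 : ∀ q, A.indicator F q ≤ B.indicator F q + C.indicator F q := by
    intro q
    have hB0 : 0 ≤ B.indicator F q := Set.indicator_nonneg (fun x _ => hFnn x) q
    have hC0 : 0 ≤ C.indicator F q := Set.indicator_nonneg (fun x _ => hFnn x) q
    by_cases hq : q ∈ A
    · rcases le_total (r q.2) (r q.1) with h | h
      · have hqB : q ∈ B := by
          simp only [hB, Set.mem_setOf_eq, dist_comm q.2 q.1]
          calc dist q.1 q.2 ≤ r q.1 + r q.2 := hq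
            _ ≤ 2 * r q.1 := by linarith
        rw [Set.indicator_of_mem hq, Set.indicator_of_mem hqB]
        linarith
      · have hqC : q ∈ C := by
          simp only [hC, Set.mem_setOf_eq]
          calc dist q.1 q.2 ≤ r q.1 + r q.2 := hq
            _ ≤ 2 * r q.2 := by linarith
        rw [Set.indicator_of_mem hq, Set.indicator_of_mem hqC]
        linarith
    · rw [Set.indicator_of_notMem hq]; linarith
  have h3 : (∫ q, A.indicator F q ∂(μ.prod μ)) ≤
      (∫ q, B.indicator F q ∂(μ.prod μ)) + ∫ q, C.indicator F q ∂(μ.prod μ) := by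
    rw [← integral_add hBint hCint]
    exact integral_mono hAint (hBint.add hCint) h2
  have h4 : (∫ q, C.indicator F q ∂(μ.prod μ)) = ∫ q, B.indicator F q ∂(μ.prod μ) := by
    rw [← integral_prod_swap (B.indicator F)]
    refine integral_congr_ae (Filter.Eventually.of_forall fun q => ?_)
    simp only [Set.indicator_apply, hB, hC, hF, Prod.swap, Set.mem_setOf_eq]
    by_cases h : dist q.1 q.2 ≤ 2 * r q.2 <;> simp [h, mul_comm]
  have h5 : (∫ q, B.indicator F q ∂(μ.prod μ)) =
      ∫ x, f x * ∫ y in {y | dist y x ≤ 2 * r x}, f y ∂μ ∂μ := by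
    rw [integral_prod _ hBint]
    refine integral_congr_ae (Filter.Eventually.of_forall fun x => ?_)
    have hset : MeasurableSet {y : α | dist y x ≤ 2 * r x} := by
      have : {y : α | dist y x ≤ 2 * r x} = Metric.closedBall x (2 * r x) := by
        ext y; simp [Metric.mem_closedBall]
      rw [this]; exact measurableSet_closedBall
    have heq : (∫ y, B.indicator F (x, y) ∂μ) =
        ∫ y, ({y : α | dist y x ≤ 2 * r x}).indicator (fun y => f x * f y) y ∂μ := by
      refine integral_congr_ae (Filter.Eventually.of_forall fun y => ?_)
      simp [Set.indicator_apply, hB, hF]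
    dsimp only
    rw [heq, integral_indicator hset, integral_const_mul]
  rw [h1, h5.symm]
  linarith [h3, h4]

/-- for `r : ℝ^d → [0,∞)` measurable,
`∫∫ f(x) f(y) 1{‖x−y‖ ≤ r(x) + r(y)} dy dx
  ≤ 2 ∫ f(x) (∫_{‖y−x‖ ≤ 2 r(x)} f(y) dy) dx`. -/
theorem double_integral_symmetrization_bound
    (d : ℕ) (hd : 1 ≤ d) (p : ENNReal) [Fact (1 ≤ p)]
    (f : PiLp p (fun _ : Fin d => ℝ) → ℝ)
    (hf_meas : Measurable f) (hf_nonneg : ∀ x, 0 ≤ f x)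
    (hf_int : Integrable f)
    (r : PiLp p (fun _ : Fin d => ℝ) → ℝ)
    (hr_meas : Measurable r) (hr_nonneg : ∀ x, 0 ≤ r x) :
    (∫ x, ∫ y, (if dist x y ≤ r x + r y then f x * f y else 0)) ≤
      2 * ∫ x, f x * ∫ y in {y | dist y x ≤ 2 * r x}, f y := by
  exact aux_symmetrization volume f hf_nonneg hf_int r hr_meas
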